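/- Let φ : ℝ^{nX} → ℝ be differentiable, strictly convex, and supercoercive (φ(x)/‖x‖ → ∞ as ‖x‖ → ∞). Let S be a real nX × nR matrix, O a real nN × nR matrix, and μ̃ ∈ ℝ^{nN}, and suppose there exists yᴾ ∈ ℝ^{nX} with Σᵢ yᴾᵢ Sⁱᵣ + Σₘ μ̃ₘ Oᵐᵣ = 0 for all r. Then for every x₀ ∈ ℝ^{nX} the function ξ ↦ −φ(x₀ + S ξ) − Σₘ μ̃ₘ (O ξ)ᵐ attains its maximum on ℝ^{nR}; i.e., an equilibrium state exists. -/

import Mathlib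

/-- **Existence of an equilibrium state under the consistency condition.**
If `φ` is differentiable, strictly convex and supercoercive, and the equilibrium equations
`∑ i, yP i * S i r + ∑ m, μ m * O m r = 0` have a solution `yP`, then for every initial
condition `x₀` the total-entropy function `ξ ↦ -φ (x₀ + S ξ) - ∑ m, μ m * (O ξ) m`
attains its maximum. -/
theorem equilibrium_exists_of_consistency
    {nX nR nN : ℕ} (φ : (Fin nX → ℝ) → ℝ)
    (hdiff : Differentiable ℝ φ)
    (hconv : StrictConvexOn ℝ Set.univ φ)
    (hcoer : Filter.Tendsto (fun x => φ x / ‖x‖) (Filter.cocompact (Fin nX → ℝ))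
      Filter.atTop)
    (S : Matrix (Fin nX) (Fin nR) ℝ) (O : Matrix (Fin nN) (Fin nR) ℝ)
    (μ : Fin nN → ℝ)
    (hyP : ∃ yP : Fin nX → ℝ, ∀ r, (∑ i, yP i * S i r) + (∑ m, μ m * O m r) = 0)
    (x₀ : Fin nX → ℝ) :
    ∃ ξEQ : Fin nR → ℝ, ∀ ξ : Fin nR → ℝ,
      -φ (x₀ + S.mulVec ξ) - ∑ m, μ m * O.mulVec ξ m ≤
        -φ (x₀ + S.mulVec ξEQ) - ∑ m, μ m * O.mulVec ξEQ m := by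
  obtain ⟨yP, hyP⟩ := hyP
  -- key algebraic identity
  have key : ∀ ξ : Fin nR → ℝ,
      (∑ m, μ m * O.mulVec ξ m) = -∑ i, yP i * S.mulVec ξ i := by
    intro ξ
    have : (∑ i, yP i * S.mulVec ξ i) + (∑ m, μ m * O.mulVec ξ m) = 0 := by
      simp only [Matrix.mulVec, dotProduct, Finset.mul_sum]
      rw [Finset.sum_comm, Finset.sum_comm (γ := Fin nN)]
      rw [← Finset.sum_add_distrib]
      refine Finset.sum_eq_zero fun r _ => ?_
      have := hyP r
      simp only [← mul_assoc]
      rw [← Finset.sum_mul, ← Finset.sum_mul, ← add_mul, this, zero_mul]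
    linarith
  set g : (Fin nX → ℝ) → ℝ := fun x => φ x - ∑ i, yP i * x i with hg
  have hgcont : Continuous g := by
    apply hdiff.continuous.sub
    exact continuous_finset_sum _ fun i _ => (continuous_const.mul (continuous_apply i))
  -- coercivity of g
  set C : ℝ := ∑ i, |yP i| with hC
  have hbound : ∀ x : Fin nX → ℝ, φ x - C * ‖x‖ ≤ g x := by
    intro x
    have : ∑ i, yP i * x i ≤ C * ‖x‖ := by
      calc ∑ i, yP i * x i ≤ ∑ i, |yP i| * ‖x‖ := by
            refine Finset.sum_le_sum fun i _ => ?_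
            calc yP i * x i ≤ |yP i * x i| := le_abs_self _
              _ = |yP i| * |x i| := abs_mul _ _
              _ ≤ |yP i| * ‖x‖ := by
                  refine mul_le_mul_of_nonneg_left ?_ (abs_nonneg _)
                  simpa using norm_le_pi_norm x i
        _ = C * ‖x‖ := by rw [← Finset.sum_mul]
    simp only [hg]
    linarith
  have hgcoer : Filter.Tendsto g (Filter.cocompact (Fin nX → ℝ)) Filter.atTop := by
    have hnorm : Filter.Tendsto (fun x : Fin nX → ℝ => ‖x‖) (Filter.cocompact _)
        Filter.atTop := tendsto_norm_cocompact_atTop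
    have h1 : Filter.Tendsto (fun x : Fin nX → ℝ => ‖x‖ * (φ x / ‖x‖ + (-C)))
        (Filter.cocompact _) Filter.atTop :=
      Filter.Tendsto.atTop_mul_atTop₀ hnorm
        (Filter.tendsto_atTop_add_const_right _ (-C) hcoer)
    have h2 : Filter.Tendsto (fun x : Fin nX → ℝ => φ x - C * ‖x‖)
        (Filter.cocompact _) Filter.atTop := by
      refine h1.congr' ?_
      filter_upwards [hnorm.eventually (Filter.eventually_gt_atTop 0)] with x hx
      field_simp
      ring
    exact Filter.tendsto_atTop_mono hbound h2
  -- the closed affine set of reachable states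
  set V : Set (Fin nX → ℝ) := Set.range (fun ξ : Fin nR → ℝ => x₀ + S.mulVec ξ) with hV
  have hVclosed : IsClosed V := by
    have : V = (fun x => x₀ + x) '' (LinearMap.range S.mulVecLin : Set (Fin nX → ℝ)) := by
      ext x
      constructor
      · rintro ⟨ξ, rfl⟩
        exact ⟨S.mulVec ξ, ⟨ξ, by simp [Matrix.mulVecLin]⟩, rfl⟩
      · rintro ⟨y, ⟨ξ, rfl⟩, rfl⟩
        exact ⟨ξ, by simp [Matrix.mulVecLin]⟩
    rw [this]
    exact (Homeomorph.addLeft x₀).isClosedMap _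
      (Submodule.closed_of_finiteDimensional _)
  have hx₀V : x₀ ∈ V := ⟨0, by simp⟩
  obtain ⟨xm, hxmV, hxm⟩ := hgcont.continuousOn.exists_isMinOn' hVclosed hx₀V
    ((hgcoer.eventually (Filter.eventually_ge_atTop (g x₀))).filter_mono
      inf_le_left)
  obtain ⟨ξEQ, hξEQ⟩ := hxmV
  refine ⟨ξEQ, fun ξ => ?_⟩
  have h1 : g (x₀ + S.mulVec ξEQ) ≤ g (x₀ + S.mulVec ξ) := by
    rw [show x₀ + S.mulVec ξEQ = xm from hξEQ]; exact hxm ⟨ξ, rfl⟩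
  have e1 := key ξ
  have e2 := key ξEQ
  have s1 : ∀ ζ : Fin nR → ℝ, ∑ i, yP i * (x₀ + S.mulVec ζ) i
      = (∑ i, yP i * x₀ i) + ∑ i, yP i * S.mulVec ζ i := by
    intro ζ
    rw [← Finset.sum_add_distrib]
    exact Finset.sum_congr rfl fun i _ => by simp [mul_add]
  simp only [hg, s1] at h1
  rw [e1, e2]
  linarith
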